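/- Let $h\ge 0$, and let $L,M(t):C([-h,0],\mathbb{R}^n)\to\mathbb{R}^n$ for $t\le 0$ be continuous linear operators with $\sup_{t\le 0}\|M(t)\|<\infty$ and $\|M(t)\|\to 0$ as $t\to-\infty$. Then the linear functional differential system $x'(t)=(L+M(t))x_t$, $t\le 0$, has no nonzero solution $x:(-\infty,0]\to\mathbb{R}^n$ that is exponentially small at $-\infty$, i.e. such that $x(t)e^{\gamma t}\to 0$ as $t\to-\infty$ for every $\gamma\in\mathbb{R}$. -/

import Mathlib

/-- Non-existence of super-exponentially small solutions at `-∞` for an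
asymptotically autonomous linear functional differential system
`x'(t) = (L + M(t)) xₜ`, where `‖M(t)‖` is bounded on `(-∞,0]` and tends to `0`
as `t → -∞`. -/
theorem no_small_solutions (n : ℕ) (h : ℝ) (hh : 0 ≤ h)
    (L : C(Set.Icc (-h) (0 : ℝ), Fin n → ℝ) →L[ℝ] (Fin n → ℝ))
    (M : ℝ → (C(Set.Icc (-h) (0 : ℝ), Fin n → ℝ) →L[ℝ] (Fin n → ℝ)))
    (hMbdd : ∃ C : ℝ, ∀ t ≤ (0 : ℝ), ‖M t‖ ≤ C)
    (hM0 : Filter.Tendsto (fun t => ‖M t‖) Filter.atBot (nhds 0))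
    (x : ℝ → Fin n → ℝ) (hx : Continuous x)
    (hsol : ∀ t ≤ (0 : ℝ), HasDerivAt x
      ((L + M t) (ContinuousMap.mk (fun s : Set.Icc (-h) (0 : ℝ) => x (t + (s : ℝ)))
        (hx.comp (continuous_const.add continuous_subtype_val)))) t)
    (hsmall : ∀ γ : ℝ,
      Filter.Tendsto (fun t => Real.exp (γ * t) • x t) Filter.atBot (nhds 0)) :
    ∀ t ≤ (0 : ℝ), x t = 0 := by
  obtain ⟨C, hC⟩ := hMbdd
  set D : ℝ := ‖L‖ + max C 0 + 1 with hDdef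
  have hD1 : (1:ℝ) ≤ D := by
    have h1 : (0:ℝ) ≤ ‖L‖ := ContinuousLinearMap.opNorm_nonneg L
    have h2 : (0:ℝ) ≤ max C 0 := le_max_right _ _
    simp only [hDdef]; linarith
  have hDpos : (0:ℝ) < D := lt_of_lt_of_le one_pos hD1
  -- operator norm bound
  have hop : ∀ v ≤ (0:ℝ), ∀ φ : C(Set.Icc (-h) (0 : ℝ), Fin n → ℝ),
      ‖(L + M v) φ‖ ≤ D * ‖φ‖ := by
    intro v hv φ
    have h1 : ‖(L + M v) φ‖ ≤ ‖L φ‖ + ‖M v φ‖ := by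
      rw [ContinuousLinearMap.add_apply]; exact norm_add_le _ _
    have h2 : ‖L φ‖ ≤ ‖L‖ * ‖φ‖ := L.le_opNorm φ
    have h3 : ‖M v φ‖ ≤ ‖M v‖ * ‖φ‖ := (M v).le_opNorm φ
    have h4 : ‖M v‖ ≤ max C 0 := le_trans (hC v hv) (le_max_left _ _)
    have h5 : (0:ℝ) ≤ ‖φ‖ := norm_nonneg _
    nlinarith [norm_nonneg (M v)]
  intro t ht
  -- smallness with rate 2D+1
  have hsm : ∀ᶠ s in Filter.atBot, ‖Real.exp (-(2*D+1) * s) • x s‖ < 1 := by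
    have := Metric.tendsto_nhds.mp (hsmall (-(2*D+1))) 1 one_pos
    simpa [dist_zero_right] using this
  obtain ⟨T, hT⟩ := Filter.eventually_atBot.mp hsm
  have hxsmall : ∀ s ≤ T, ‖x s‖ ≤ Real.exp ((2*D+1) * s) := by
    intro s hs
    have h1 := hT s hs
    rw [norm_smul, Real.norm_eq_abs, abs_of_pos (Real.exp_pos _)] at h1
    have h2 : Real.exp ((2*D+1)*s) * (Real.exp (-(2*D+1)*s) * ‖x s‖)
        ≤ Real.exp ((2*D+1)*s) * 1 :=
      mul_le_mul_of_nonneg_left h1.le (Real.exp_pos _).le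
    rw [← mul_assoc, ← Real.exp_add] at h2
    have h3 : (2*D+1)*s + -(2*D+1)*s = 0 := by ring
    rw [h3, Real.exp_zero, one_mul, mul_one] at h2
    exact h2
  -- key bound for each t₀
  have key : ∀ t₀, t₀ ≤ T → t₀ ≤ t → ‖x t‖ ≤ 2 * Real.exp (2*D*t) * Real.exp t₀ := by
    intro t₀ hT0 htt
    set c : ℝ := 2 * Real.exp ((2*D+1) * t₀) with hcdef
    set B : ℝ → ℝ := fun v => c * Real.exp (2*D*(v - t₀)) with hBdef
    have hcpos : 0 < c := by positivity
    have hBpos : ∀ v, 0 < B v := fun v => by positivity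
    have hBmono : ∀ ⦃u v : ℝ⦄, u ≤ v → B u ≤ B v := by
      intro u v huv
      have : 2*D*(u - t₀) ≤ 2*D*(v - t₀) := by nlinarith
      exact mul_le_mul_of_nonneg_left (Real.exp_le_exp.mpr this) hcpos.le
    have hcB : ∀ v, t₀ ≤ v → c ≤ B v := by
      intro v hv
      have : (0:ℝ) ≤ 2*D*(v - t₀) := by nlinarith
      have := Real.one_le_exp this
      calc c = c * 1 := (mul_one c).symm
        _ ≤ c * Real.exp (2*D*(v - t₀)) := mul_le_mul_of_nonneg_left this hcpos.le
    -- bound on x below t₀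
    have hbelow : ∀ s ≤ t₀, ‖x s‖ ≤ c / 2 := by
      intro s hs
      refine le_trans (hxsmall s (le_trans hs hT0)) ?_
      have : Real.exp ((2*D+1)*s) ≤ Real.exp ((2*D+1)*t₀) :=
        Real.exp_le_exp.mpr (by nlinarith)
      rw [hcdef]; linarith
    set S : Set ℝ := {u | u ∈ Set.Icc t₀ t ∧ ∀ s ∈ Set.Icc t₀ u, ‖x s‖ ≤ B s} with hSdef
    have ht₀S : t₀ ∈ S := by
      refine ⟨⟨le_refl _, htt⟩, ?_⟩
      intro s hs
      have : s = t₀ := le_antisymm hs.2 hs.1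
      subst this
      refine le_trans (hbelow s (le_refl _)) (le_trans ?_ (hcB s (le_refl _)))
      linarith
    have hSne : S.Nonempty := ⟨t₀, ht₀S⟩
    have hSbdd : BddAbove S := ⟨t, fun u hu => hu.1.2⟩
    set u₁ : ℝ := sSup S with hu₁def
    have hu₁mem : u₁ ∈ Set.Icc t₀ t :=
      ⟨le_csSup hSbdd ht₀S, csSup_le hSne (fun u hu => hu.1.2)⟩
    have hu₁0 : u₁ ≤ 0 := le_trans hu₁mem.2 ht
    -- bound on Ico
    have hIco : Set.Ico t₀ u₁ ⊆ {v | ‖x v‖ ≤ B v} := by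
      intro s hs
      obtain ⟨u, huS, hsu⟩ := exists_lt_of_lt_csSup hSne hs.2
      exact huS.2 s ⟨hs.1, hsu.le⟩
    have hu₁S : ∀ s ∈ Set.Icc t₀ u₁, ‖x s‖ ≤ B s := by
      have hclosed : IsClosed {v : ℝ | ‖x v‖ ≤ B v} :=
        isClosed_le (by fun_prop) (by fun_prop)
      rcases eq_or_lt_of_le hu₁mem.1 with heq | hlt
      · intro s hs
        have : s = t₀ := le_antisymm (heq ▸ hs.2) hs.1
        subst this; exact ht₀S.2 s ⟨le_refl _, le_refl _⟩
      · intro s hs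
        have hsub : closure (Set.Ico t₀ u₁) ⊆ {v : ℝ | ‖x v‖ ≤ B v} :=
          hclosed.closure_subset_iff.mpr hIco
        rw [closure_Ico (ne_of_lt hlt)] at hsub
        exact hsub hs
    -- derivative bound
    have hderiv_bound : ∀ v ∈ Set.Icc t₀ u₁, ‖deriv x v‖ ≤ D * B v := by
      intro v hv
      have hv0 : v ≤ 0 := le_trans hv.2 hu₁0
      rw [(hsol v hv0).deriv]
      refine le_trans (hop v hv0 _) ?_
      have hφ : ‖(ContinuousMap.mk (fun s : Set.Icc (-h) (0 : ℝ) => x (v + (s : ℝ)))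
          (hx.comp (continuous_const.add continuous_subtype_val)))‖ ≤ B v := by
        rw [ContinuousMap.norm_le _ (hBpos v).le]
        intro s
        show ‖x (v + (s : ℝ))‖ ≤ B v
        rcases le_or_gt (v + (s : ℝ)) t₀ with hc1 | hc1
        · exact le_trans (hbelow _ hc1) (le_trans (by linarith) (hcB v hv.1))
        · have hle : v + (s : ℝ) ≤ v := by
            have := s.2.2; linarith
          exact le_trans (hu₁S _ ⟨hc1.le, le_trans hle hv.2⟩) (hBmono hle)
      exact mul_le_mul_of_nonneg_left hφ hDpos.le
    -- integrability of deriv x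
    have hcontB : Continuous fun v => D * B v := by fun_prop
    have hBint : IntervalIntegrable (fun v => D * B v) MeasureTheory.volume t₀ u₁ :=
      hcontB.intervalIntegrable _ _
    have hmeas : MeasureTheory.AEStronglyMeasurable (deriv x)
        (MeasureTheory.volume.restrict (Set.uIoc t₀ u₁)) :=
      (measurable_deriv x).aestronglyMeasurable
    have haebound : ∀ᵐ v ∂(MeasureTheory.volume.restrict (Set.uIoc t₀ u₁)),
        ‖deriv x v‖ ≤ D * B v := by
      rw [Set.uIoc_of_le hu₁mem.1]
      refine (MeasureTheory.ae_restrict_iff' measurableSet_Ioc).mpr ?_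
      exact MeasureTheory.ae_of_all _ fun v hv =>
        hderiv_bound v ⟨hv.1.le, hv.2⟩
    have hintg : IntervalIntegrable (deriv x) MeasureTheory.volume t₀ u₁ := by
      rw [intervalIntegrable_iff] at hBint ⊢
      exact hBint.mono' hmeas haebound
    -- FTC
    have hFTC : ∫ v in t₀..u₁, deriv x v = x u₁ - x t₀ := by
      refine intervalIntegral.integral_eq_sub_of_hasDerivAt ?_ hintg
      intro v hv
      rw [Set.uIcc_of_le hu₁mem.1] at hv
      exact ((hsol v (le_trans hv.2 hu₁0)).differentiableAt).hasDerivAt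
    -- compute ∫ D * B
    have hGder : ∀ v : ℝ, HasDerivAt (fun w => c / 2 * Real.exp (2*D*(w - t₀))) (D * B v) v := by
      intro v
      have h1 : HasDerivAt (fun w : ℝ => 2*D*(w - t₀)) (2*D) v := by
        simpa using ((hasDerivAt_id v).sub_const t₀).const_mul (2*D)
      have h2 := (h1.exp).const_mul (c / 2)
      rw [show D * B v = c / 2 * (Real.exp (2 * D * (v - t₀)) * (2 * D)) by rw [hBdef]; ring]
      exact h2
    have hBcalc : ∫ v in t₀..u₁, D * B v = B u₁ / 2 - c / 2 := by
      rw [intervalIntegral.integral_eq_sub_of_hasDerivAt (fun v _ => hGder v) hBint]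
      rw [hBdef]; simp; ring
    -- main estimate at u₁
    have hmain : ‖x u₁‖ ≤ B u₁ / 2 := by
      have h1 : x u₁ = x t₀ + ∫ v in t₀..u₁, deriv x v := by rw [hFTC]; abel
      have h2 : ‖x u₁‖ ≤ ‖x t₀‖ + ‖∫ v in t₀..u₁, deriv x v‖ := by
        rw [h1]; exact norm_add_le _ _
      have h3 : ‖∫ v in t₀..u₁, deriv x v‖ ≤ |∫ v in t₀..u₁, D * B v| :=
        intervalIntegral.norm_integral_le_abs_of_norm_le haebound hBint
      have h3' : |∫ v in t₀..u₁, D * B v| = ∫ v in t₀..u₁, D * B v :=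
        abs_of_nonneg (intervalIntegral.integral_nonneg hu₁mem.1
          (fun v _ => (mul_pos hDpos (hBpos v)).le))
      rw [h3'] at h3
      have h4 : ‖x t₀‖ ≤ c / 2 := hbelow t₀ (le_refl _)
      rw [hBcalc] at h3
      linarith
    -- u₁ = t
    have hu₁t : u₁ = t := by
      by_contra hne
      have hlt : u₁ < t := lt_of_le_of_ne hu₁mem.2 hne
      have hstrict : ‖x u₁‖ < B u₁ := lt_of_le_of_lt hmain (by linarith [hBpos u₁])
      have hopen : IsOpen {v : ℝ | ‖x v‖ < B v} :=
        isOpen_lt (by fun_prop) (by fun_prop)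
      have hnhds : {v : ℝ | ‖x v‖ < B v} ∈ nhds u₁ := hopen.mem_nhds hstrict
      obtain ⟨δ, hδpos, hδ⟩ := Metric.mem_nhds_iff.mp hnhds
      set u' : ℝ := min (u₁ + δ/2) t with hu'def
      have hu'gt : u₁ < u' := by
        rw [hu'def]; exact lt_min (by linarith) hlt
      have hu'S : u' ∈ S := by
        refine ⟨⟨le_trans hu₁mem.1 hu'gt.le, min_le_right _ _⟩, ?_⟩
        intro s hs
        rcases le_or_gt s u₁ with hc1 | hc1
        · exact hu₁S s ⟨hs.1, hc1⟩
        · have hball : s ∈ Metric.ball u₁ δ := by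
            rw [Metric.mem_ball, Real.dist_eq, abs_of_pos (by linarith)]
            have : s ≤ u₁ + δ/2 := le_trans hs.2 (min_le_left _ _)
            linarith
          exact (hδ hball).le
      have := le_csSup hSbdd hu'S
      rw [← hu₁def] at this
      linarith
    -- conclude
    have hxt : ‖x t‖ ≤ B t := by
      rw [← hu₁t]; exact le_trans hmain (by linarith [hBpos u₁])
    refine le_trans hxt (le_of_eq ?_)
    rw [hBdef, hcdef]
    have : Real.exp ((2*D+1) * t₀) * Real.exp (2*D*(t - t₀))
        = Real.exp (2*D*t) * Real.exp t₀ := by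
      rw [← Real.exp_add, ← Real.exp_add]; ring_nf
    calc 2 * Real.exp ((2*D+1) * t₀) * Real.exp (2*D*(t - t₀))
        = 2 * (Real.exp ((2*D+1) * t₀) * Real.exp (2*D*(t - t₀))) := by ring
      _ = 2 * (Real.exp (2*D*t) * Real.exp t₀) := by rw [this]
      _ = 2 * Real.exp (2*D*t) * Real.exp t₀ := by ring
  -- take t₀ → -∞
  have hlim : Filter.Tendsto (fun t₀ => 2 * Real.exp (2*D*t) * Real.exp t₀)
      Filter.atBot (nhds 0) := by
    have := Real.tendsto_exp_atBot.const_mul (2 * Real.exp (2*D*t))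
    simpa using this
  have hev : ∀ᶠ t₀ in Filter.atBot, ‖x t‖ ≤ 2 * Real.exp (2*D*t) * Real.exp t₀ := by
    rw [Filter.eventually_atBot]
    exact ⟨min T t, fun t₀ h0 => key t₀ (le_trans h0 (min_le_left _ _))
      (le_trans h0 (min_le_right _ _))⟩
  have : ‖x t‖ ≤ 0 := ge_of_tendsto hlim hev
  exact norm_le_zero_iff.mp this
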